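/- Let n, p1, p2 be positive integers with p1 ≤ p2, let Z1 be a real p1×n matrix and Z3 a real (p2−p1)×n matrix, and let Z2 be the p2×n matrix obtained by stacking Z1 on top of Z3. Assume Z1Z1ᵗ and Z2Z2ᵗ are invertible. Then the last p2−p1 columns of the p1×p2 matrix (Z1Z1ᵗ)⁻¹ Z1 Z2ᵗ (Z2Z2ᵗ)⁻¹ are all zero. -/
import Mathlib


open Matrix

/-- Block-matrix identity for nested design matrices completing
the proof of Theorem 2: if `Z2` is obtained by stacking `Z1` on top of `Z3`,
then the columns of `(Z1Z1ᵗ)⁻¹ Z1 Z2ᵗ (Z2Z2ᵗ)⁻¹` corresponding to the rows of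
`Z3` vanish. -/
theorem stmt6 (n p1 p2 : ℕ) (hn : 0 < n) (hp1 : 0 < p1) (hp2 : 0 < p2) (h12 : p1 ≤ p2)
    (Z1 : Matrix (Fin p1) (Fin n) ℝ) (Z3 : Matrix (Fin (p2 - p1)) (Fin n) ℝ)
    (Z2 : Matrix (Fin p1 ⊕ Fin (p2 - p1)) (Fin n) ℝ) (hZ2 : Z2 = Matrix.fromRows Z1 Z3)
    (hZ1inv : IsUnit (Z1 * Z1ᵀ)) (hZ2inv : IsUnit (Z2 * Z2ᵀ)) :
    ∀ (a : Fin p1) (j : Fin (p2 - p1)),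
      ((Z1 * Z1ᵀ)⁻¹ * Z1 * Z2ᵀ * (Z2 * Z2ᵀ)⁻¹) a (Sum.inr j) = 0 := by
  intro a j
  set E : Matrix (Fin p1) (Fin p1 ⊕ Fin (p2 - p1)) ℝ := Matrix.fromCols 1 0 with hE
  have hZ1 : Z1 = E * Z2 := by
    rw [hZ2, hE, Matrix.fromCols_mul_fromRows]
    simp
  have hdet : IsUnit (Z2 * Z2ᵀ).det := (Matrix.isUnit_iff_isUnit_det _).mp hZ2inv
  have key : (Z1 * Z1ᵀ)⁻¹ * Z1 * Z2ᵀ * (Z2 * Z2ᵀ)⁻¹ = (Z1 * Z1ᵀ)⁻¹ * E := by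
    generalize (Z1 * Z1ᵀ)⁻¹ = A
    rw [hZ1, ← Matrix.mul_assoc A E Z2, Matrix.mul_assoc (A * E) Z2,
      Matrix.mul_assoc (A * E), Matrix.mul_nonsing_inv _ hdet,
      Matrix.mul_one]
  rw [key, Matrix.mul_apply]
  apply Finset.sum_eq_zero
  intro k _
  simp [hE, Matrix.fromCols]
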